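/- In the three-armed bandit instance, removing mass from the uninformative arm does not increase the optimistic-DEC objective: Let 0 < ε < Δ ≤ 1/16 and η > 0. Consider actions A = {1, 2, 3} and mean-reward vectors V₁ = (1/2 − Δ, 1/2 + Δ, ε/2) and V₂ = (1/2 + Δ, 1/2 − Δ, ε/2), indexed by i ∈ {1, 2}. For p ∈ Δ(A), ρ ∈ Δ({1, 2}), ν ∈ Δ({1, 2}) define Ob(p, ρ, ν) = Σ_{a∈A} p(a) · Σ_{i∈{1,2}} ρ(i) · Σ_{j∈{1,2}} ν(j) · [ (1/2 + Δ) − V_j(a) − (1/η)·(V_i(a) − V_j(a))² ]. For p ∈ Δ(A), define p̃ ∈ Δ(A) by p̃ = ( p(1)/(1 − p(3)), p(2)/(1 − p(3)), 0 ) if p(3) < 1, and p̃ = (1/2, 1/2, 0) if p(3) = 1. Then for all p ∈ Δ(A), ρ ∈ Δ({1, 2}), and ν ∈ Δ({1, 2}), Ob(p̃, ρ, ν) ≤ Ob(p, ρ, ν). -/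

import Mathlib

open Finset

/-- Mean-reward vectors of the two models of the three-armed bandit instance:
`V₁ = (1/2 − Δ, 1/2 + Δ, ε/2)` and `V₂ = (1/2 + Δ, 1/2 − Δ, ε/2)`. -/
noncomputable def banditV (ε Δ : ℝ) : Fin 2 → Fin 3 → ℝ :=
  ![![1 / 2 - Δ, 1 / 2 + Δ, ε / 2], ![1 / 2 + Δ, 1 / 2 - Δ, ε / 2]]

/-- The optimistic-DEC objective
`Ob(p, ρ, ν) = Σ_a p(a) Σ_i ρ(i) Σ_j ν(j) [ (1/2 + Δ) − V_j(a) − (1/η)(V_i(a) − V_j(a))² ]`. -/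
noncomputable def banditOb (ε Δ η : ℝ) (p : Fin 3 → ℝ) (ρ ν : Fin 2 → ℝ) : ℝ :=
  ∑ a : Fin 3, p a * ∑ i : Fin 2, ρ i * ∑ j : Fin 2, ν j *
    ((1 / 2 + Δ) - banditV ε Δ j a - (1 / η) * (banditV ε Δ i a - banditV ε Δ j a) ^ 2)

/-- The modification `p̃` of `p` that removes all mass from the third (uninformative) arm:
`p̃ = (p(1)/(1 − p(3)), p(2)/(1 − p(3)), 0)` if `p(3) < 1`, and `(1/2, 1/2, 0)` otherwise. -/
noncomputable def banditTilde (p : Fin 3 → ℝ) : Fin 3 → ℝ :=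
  if p 2 < 1 then ![p 0 / (1 - p 2), p 1 / (1 - p 2), 0] else ![1 / 2, 1 / 2, 0]


private lemma banditAux (ρ0 ρ1 ν0 ν1 T00 T01 T10 T11 C : ℝ)
    (hρ0 : 0 ≤ ρ0) (hρ1 : 0 ≤ ρ1) (hν0 : 0 ≤ ν0) (hν1 : 0 ≤ ν1)
    (hρs : ρ0 + ρ1 = 1) (hνs : ν0 + ν1 = 1)
    (h00 : T00 ≤ C) (h01 : T01 ≤ C) (h10 : T10 ≤ C) (h11 : T11 ≤ C) :
    ρ0 * (ν0 * T00 + ν1 * T01) + ρ1 * (ν0 * T10 + ν1 * T11) ≤ C := by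
  have h1 : (ρ0 + ρ1) * (ν0 + ν1) = 1 := by rw [hρs, hνs]; ring
  have h2 : C * ((ρ0 + ρ1) * (ν0 + ν1)) = C := by rw [h1]; ring
  linarith [mul_nonneg (mul_nonneg hρ0 hν0) (sub_nonneg.mpr h00),
    mul_nonneg (mul_nonneg hρ0 hν1) (sub_nonneg.mpr h01),
    mul_nonneg (mul_nonneg hρ1 hν0) (sub_nonneg.mpr h10),
    mul_nonneg (mul_nonneg hρ1 hν1) (sub_nonneg.mpr h11), h2]

/-- In the three-armed bandit instance, removing mass from the uninformative arm does not
increase the optimistic-DEC objective: for `0 < ε < Δ ≤ 1/16`, `η > 0`, and all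
`p ∈ Δ({1,2,3})`, `ρ, ν ∈ Δ({1,2})`, `Ob(p̃, ρ, ν) ≤ Ob(p, ρ, ν)`. -/
theorem banditOb_tilde_le (ε Δ η : ℝ) (hε : 0 < ε) (hεΔ : ε < Δ) (hΔ : Δ ≤ 1 / 16)
    (hη : 0 < η)
    (p : Fin 3 → ℝ) (hp : p ∈ stdSimplex ℝ (Fin 3))
    (ρ ν : Fin 2 → ℝ) (hρ : ρ ∈ stdSimplex ℝ (Fin 2)) (hν : ν ∈ stdSimplex ℝ (Fin 2)) :
    banditOb ε Δ η (banditTilde p) ρ ν ≤ banditOb ε Δ η p ρ ν := by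
  obtain ⟨hpn, hps⟩ := hp
  obtain ⟨hρn, hρs⟩ := hρ
  obtain ⟨hνn, hνs⟩ := hν
  rw [Fin.sum_univ_three] at hps
  rw [Fin.sum_univ_two] at hρs hνs
  have hp0 := hpn 0; have hp1 := hpn 1; have hp2 := hpn 2
  have hρ0 := hρn 0; have hρ1 := hρn 1
  have hν0 := hνn 0; have hν1 := hνn 1
  have hη' : 0 ≤ 1 / η := by positivity
  set c : Fin 3 → ℝ := fun a => ∑ i : Fin 2, ρ i * ∑ j : Fin 2, ν j *
    ((1 / 2 + Δ) - banditV ε Δ j a - (1 / η) * (banditV ε Δ i a - banditV ε Δ j a) ^ 2)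
    with hc
  have hOb : ∀ q : Fin 3 → ℝ, banditOb ε Δ η q ρ ν = q 0 * c 0 + q 1 * c 1 + q 2 * c 2 := by
    intro q
    rw [banditOb, Fin.sum_univ_three]
  have hΔ0 : (0:ℝ) < Δ := lt_trans hε hεΔ
  have hsq : 0 ≤ 1 / η * (2 * Δ) ^ 2 := by positivity
  have hc0 : c 0 ≤ 2 * Δ := by
    simp only [hc, Fin.sum_univ_two, banditV, Matrix.cons_val_zero, Matrix.cons_val_one,
      Matrix.head_cons]
    refine banditAux _ _ _ _ _ _ _ _ _ hρ0 hρ1 hν0 hν1 hρs hνs ?_ ?_ ?_ ?_ <;> nlinarith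
  have hc1 : c 1 ≤ 2 * Δ := by
    simp only [hc, Fin.sum_univ_two, banditV, Matrix.cons_val_zero, Matrix.cons_val_one,
      Matrix.head_cons]
    refine banditAux _ _ _ _ _ _ _ _ _ hρ0 hρ1 hν0 hν1 hρs hνs ?_ ?_ ?_ ?_ <;> nlinarith
  have hc2 : c 2 = 1 / 2 + Δ - ε / 2 := by
    simp only [hc, Fin.sum_univ_two, banditV, Matrix.cons_val_zero, Matrix.cons_val_one,
      Matrix.head_cons, Matrix.cons_val_two, Matrix.tail_cons]
    linear_combination ((1 / 2 + Δ - ε / 2) * (ν 0 + ν 1)) * hρs + (1 / 2 + Δ - ε / 2) * hνs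
  have hc2' : 2 * Δ ≤ c 2 := by rw [hc2]; linarith
  clear hc
  clear_value c
  rw [hOb, hOb]
  by_cases h : p 2 < 1
  · have ht : 0 < 1 - p 2 := by linarith
    have htil0 : banditTilde p 0 = p 0 / (1 - p 2) := by simp [banditTilde, h]
    have htil1 : banditTilde p 1 = p 1 / (1 - p 2) := by simp [banditTilde, h]
    have htil2 : banditTilde p 2 = 0 := by simp [banditTilde, h]
    rw [htil0, htil1, htil2]
    rw [div_mul_eq_mul_div, div_mul_eq_mul_div, ← add_div, zero_mul, add_zero,
      div_le_iff₀ ht]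
    have hp2e : p 2 = 1 - p 0 - p 1 := by linarith
    rw [hp2e]
    have ht1 : (0:ℝ) ≤ 1 - p 0 - p 1 := by linarith
    have ht2 : (0:ℝ) ≤ p 0 * (c 2 - c 0) + p 1 * (c 2 - c 1) :=
      add_nonneg (mul_nonneg hp0 (by linarith)) (mul_nonneg hp1 (by linarith))
    linarith [mul_nonneg ht1 ht2]
  · have h2 : p 2 = 1 := le_antisymm (by linarith) (not_lt.mp h)
    have h0 : p 0 = 0 := by linarith
    have h1 : p 1 = 0 := by linarith
    have htil0 : banditTilde p 0 = 1 / 2 := by simp [banditTilde, h]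
    have htil1 : banditTilde p 1 = 1 / 2 := by simp [banditTilde, h]
    have htil2 : banditTilde p 2 = 0 := by simp [banditTilde, h]
    rw [htil0, htil1, htil2, h0, h1, h2]
    linarith
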